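/- Let τ2, τ3 > 0. For each λ > 0 let β_λ > 0 be the unique zero of g_λ(β) = τ2·2^{τ3/β}·(1 − τ3·ln 2/β) − τ2 + λ on (0,∞). Then the map λ ↦ β_λ is strictly decreasing on (0, ∞), β_λ → 0 as λ → ∞, and β_λ → ∞ as λ → 0⁺. -/

import Mathlib

open Real Filter Set

private lemma F_strictAnti : StrictAntiOn (fun x : ℝ => Real.exp x * (1 - x)) (Set.Ici 0) := by
  apply strictAntiOn_of_deriv_neg (convex_Ici 0)
  · exact (Real.continuous_exp.mul (continuous_const.sub continuous_id)).continuousOn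
  · intro x hx
    rw [interior_Ici] at hx
    have h : HasDerivAt (fun x : ℝ => Real.exp x * (1 - x)) (-x * Real.exp x) x := by
      have := (Real.hasDerivAt_exp x).fun_mul ((hasDerivAt_const x (1:ℝ)).fun_sub (hasDerivAt_id x))
      refine this.congr_deriv ?_
      simp only [id]
      ring
    rw [h.deriv]
    have := Real.exp_pos x
    have hx' : 0 < x := hx
    nlinarith

/-- Let `β_λ` denote the unique positive zero of
`g_λ(β) = τ2·2^{τ3/β}·(1 − τ3·ln 2/β) − τ2 + λ`. Then `λ ↦ β_λ` is strictly
decreasing on `(0,∞)`, tends to `0` as `λ → ∞` and to `∞` as `λ → 0⁺`. -/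
theorem fast_beta_lambda_monotone
    (τ2 τ3 : ℝ) (h2 : 0 < τ2) (h3 : 0 < τ3)
    (βof : ℝ → ℝ)
    (hβof : ∀ lam : ℝ, 0 < lam → 0 < βof lam ∧
      τ2 * (2 : ℝ) ^ (τ3 / βof lam) * (1 - τ3 * Real.log 2 / βof lam) - τ2 + lam
        = 0) :
    StrictAntiOn βof (Set.Ioi (0 : ℝ)) ∧
    Filter.Tendsto βof Filter.atTop (nhds 0) ∧
    Filter.Tendsto βof (nhdsWithin 0 (Set.Ioi (0 : ℝ))) Filter.atTop := by
  set c : ℝ := τ3 * Real.log 2 with hc_def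
  have hlog2 : 0 < Real.log 2 := Real.log_pos one_lt_two
  have hc : 0 < c := mul_pos h3 hlog2
  set F : ℝ → ℝ := fun x => Real.exp x * (1 - x) with hF_def
  have hF : StrictAntiOn F (Set.Ici 0) := F_strictAnti
  have hF0 : F 0 = 1 := by simp [hF_def]
  have key : ∀ lam : ℝ, 0 < lam → F (c / βof lam) = 1 - lam / τ2 := by
    intro lam hl
    obtain ⟨hβ, heq⟩ := hβof lam hl
    have h2' : (2:ℝ) ^ (τ3 / βof lam) = Real.exp (c / βof lam) := by
      rw [Real.rpow_def_of_pos two_pos]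
      congr 1
      rw [hc_def]
      ring
    have heq2 : τ2 * F (c / βof lam) - τ2 + lam = 0 := by
      rw [hF_def]
      simp only
      rw [← h2']
      have : c / βof lam = τ3 * Real.log 2 / βof lam := by rw [hc_def]
      rw [this]
      linarith [heq]
    field_simp
    linear_combination heq2
  -- F-value lemma: F (c / M) < 1 for M > 0
  have hFlt : ∀ M : ℝ, 0 < M → F (c / M) < 1 := by
    intro M hM
    have := hF (Set.self_mem_Ici) (le_of_lt (div_pos hc hM)) (div_pos hc hM)
    rw [hF0] at this
    exact this
  refine ⟨?_, ?_, ?_⟩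
  · intro a ha b hb hab
    have hpa := (hβof a ha).1
    have hpb := (hβof b hb).1
    have h1 : F (c / βof b) < F (c / βof a) := by
      rw [key a ha, key b hb]
      have : a / τ2 < b / τ2 := by gcongr
      linarith
    have h4 : c / βof a < c / βof b :=
      (hF.lt_iff_gt (le_of_lt (div_pos hc hpb)) (le_of_lt (div_pos hc hpa))).mp h1
    exact (div_lt_div_iff_of_pos_left hc hpa hpb).mp h4
  · rw [tendsto_order]
    constructor
    · intro a ha
      filter_upwards [eventually_gt_atTop (0:ℝ)] with lam hl
      exact ha.trans (hβof lam hl).1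
    · intro ε hε
      have hε' : 0 < ε := hε
      have hFε := hFlt ε hε'
      have hδ : 0 < τ2 * (1 - F (c / ε)) := mul_pos h2 (by linarith)
      filter_upwards [eventually_gt_atTop (τ2 * (1 - F (c / ε)))] with lam hl
      have hl0 : 0 < lam := hδ.trans hl
      have hpl := (hβof lam hl0).1
      have h1 : F (c / βof lam) < F (c / ε) := by
        rw [key lam hl0]
        have : 1 - F (c / ε) < lam / τ2 := by
          rw [lt_div_iff₀ h2]
          linarith [mul_comm τ2 (1 - F (c / ε))]
        linarith
      have h4 : c / ε < c / βof lam :=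
        (hF.lt_iff_gt (le_of_lt (div_pos hc hpl)) (le_of_lt (div_pos hc hε'))).mp h1
      exact (div_lt_div_iff_of_pos_left hc hε' hpl).mp h4
  · rw [tendsto_atTop]
    intro M
    set M' : ℝ := max M 1 with hM'_def
    have hM' : 0 < M' := lt_of_lt_of_le one_pos (le_max_right _ _)
    have hFM := hFlt M' hM'
    have hδ : 0 < τ2 * (1 - F (c / M')) := mul_pos h2 (by linarith)
    filter_upwards [Ioo_mem_nhdsGT_of_mem (Set.mem_Ico.mpr ⟨le_refl 0, hδ⟩)] with lam hlam
    obtain ⟨hl0, hlδ⟩ := hlam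
    have hpl := (hβof lam hl0).1
    have h1 : F (c / M') < F (c / βof lam) := by
      rw [key lam hl0]
      have : lam / τ2 < 1 - F (c / M') := by
        rw [div_lt_iff₀ h2]
        linarith [mul_comm τ2 (1 - F (c / M'))]
      linarith
    have h4 : c / βof lam < c / M' :=
      (hF.lt_iff_gt (le_of_lt (div_pos hc hM')) (le_of_lt (div_pos hc hpl))).mp h1
    have := (div_lt_div_iff_of_pos_left hc hpl hM').mp h4
    exact le_trans (le_max_left M 1) (le_of_lt this)
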